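/- arXiv:2102.00979 — 3 statements merged into one kernel-verified Lean document; each statement's English description precedes it below -/
import Mathlib

section
/- For all λ, α ∈ ℂ∖{0} and β, γ ∈ ℂ, the 𝔏-modules Ω(λ,α,β,γ) and Δ(λ,α,β,γ) are irreducible; and the 𝔏-module Θ(λ,α,β,γ) is irreducible if and only if 2β is not a nonnegative integer. -/
open scoped TensorProduct

noncomputable section

/-- The affine-Virasoro algebra of type `A₁`: a complex Lie algebra `L` equipped with a
basis `{e_i, f_i, h_i, d_i (i ∈ ℤ), C}` subject to the defining bracket relations. -/
structure AVAlgebra (L : Type) [LieRing L] [LieAlgebra ℂ L] where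
  e : ℤ → L
  f : ℤ → L
  h : ℤ → L
  d : ℤ → L
  cC : L
  bracket_ef : ∀ i j : ℤ, ⁅e i, f j⁆ = h (i + j) + (if i + j = 0 then (i : ℂ) • cC else 0)
  bracket_he : ∀ i j : ℤ, ⁅h i, e j⁆ = (2 : ℂ) • e (i + j)
  bracket_hf : ∀ i j : ℤ, ⁅h i, f j⁆ = (-2 : ℂ) • f (i + j)
  bracket_dd : ∀ i j : ℤ, ⁅d i, d j⁆ = ((j : ℂ) - (i : ℂ)) • d (i + j)
      + (if i + j = 0 then (((i : ℂ) ^ 3 - (i : ℂ)) / 12) • cC else 0)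
  bracket_dh : ∀ i j : ℤ, ⁅d i, h j⁆ = (j : ℂ) • h (i + j)
  bracket_hh : ∀ i j : ℤ, ⁅h i, h j⁆ = (if i + j = 0 then ((-2 : ℂ) * (i : ℂ)) • cC else 0)
  bracket_de : ∀ i j : ℤ, ⁅d i, e j⁆ = (j : ℂ) • e (i + j)
  bracket_df : ∀ i j : ℤ, ⁅d i, f j⁆ = (j : ℂ) • f (i + j)
  bracket_ee : ∀ i j : ℤ, ⁅e i, e j⁆ = 0
  bracket_ff : ∀ i j : ℤ, ⁅f i, f j⁆ = 0
  central : ∀ x : L, ⁅cC, x⁆ = 0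
  indep : LinearIndependent ℂ
    (Sum.elim (fun q : Fin 4 × ℤ => ![e, f, h, d] q.1 q.2) fun _ : Unit => cC)
  spans : Submodule.span ℂ
    (Set.range (Sum.elim (fun q : Fin 4 × ℤ => ![e, f, h, d] q.1 q.2) fun _ : Unit => cC)) = ⊤

/-- The polynomial ring ℂ[s,t]. -/
abbrev Pst : Type := MvPolynomial (Fin 2) ℂ

/-- The variable `s` of ℂ[s,t]. -/
def sVar : Pst := MvPolynomial.X 0

/-- The variable `t` of ℂ[s,t]. -/
def tVar : Pst := MvPolynomial.X 1

/-- The substitution operator `g(s,t) ↦ g(s-a, t-b)` on ℂ[s,t]. -/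
def shiftST (a b : ℂ) : Module.End ℂ Pst :=
  (MvPolynomial.aeval ![sVar - MvPolynomial.C a, tVar - MvPolynomial.C b]).toLinearMap

/-- The operator by which `d_i` acts on each of `Ω(λ,α,β,γ)`, `Δ(λ,α,β,γ)`, `Θ(λ,α,β,γ)`:
`g(s,t) ↦ λ^i (s+iγ) g(s-i,t)`. -/
def dOp (lam ga : ℂ) (i : ℤ) : Module.End ℂ Pst :=
  lam ^ i • (LinearMap.mulLeft ℂ (sVar + MvPolynomial.C ((i : ℂ) * ga)) ∘ₗ shiftST i 0)

/-- The operator by which `h_i` acts: `g(s,t) ↦ λ^i t g(s-i,t)`. -/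
def hOp (lam : ℂ) (i : ℤ) : Module.End ℂ Pst :=
  lam ^ i • (LinearMap.mulLeft ℂ tVar ∘ₗ shiftST i 0)

/-- The operator by which `e_i` acts on `Ω(λ,α,β,γ)`: `g(s,t) ↦ λ^i α g(s-i,t-2)`. -/
def omegaE (lam al : ℂ) (i : ℤ) : Module.End ℂ Pst :=
  (lam ^ i * al) • shiftST i 2

/-- The operator by which `f_i` acts on `Ω(λ,α,β,γ)`:
`g(s,t) ↦ -(λ^i/α)(t/2-β)(t/2+β+1) g(s-i,t+2)`. -/
def omegaF (lam al be : ℂ) (i : ℤ) : Module.End ℂ Pst :=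
  (-(lam ^ i / al)) • (LinearMap.mulLeft ℂ
    ((MvPolynomial.C (2⁻¹ : ℂ) * tVar - MvPolynomial.C be) *
      (MvPolynomial.C (2⁻¹ : ℂ) * tVar + MvPolynomial.C (be + 1))) ∘ₗ shiftST i (-2))

/-- The operator by which `e_i` acts on `Δ(λ,α,β,γ)`:
`g(s,t) ↦ -(λ^i/α)(t/2+β)(t/2-β-1) g(s-i,t-2)`. -/
def deltaE (lam al be : ℂ) (i : ℤ) : Module.End ℂ Pst :=
  (-(lam ^ i / al)) • (LinearMap.mulLeft ℂ
    ((MvPolynomial.C (2⁻¹ : ℂ) * tVar + MvPolynomial.C be) *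
      (MvPolynomial.C (2⁻¹ : ℂ) * tVar - MvPolynomial.C (be + 1))) ∘ₗ shiftST i 2)

/-- The operator by which `f_i` acts on `Δ(λ,α,β,γ)`: `g(s,t) ↦ λ^i α g(s-i,t+2)`. -/
def deltaF (lam al : ℂ) (i : ℤ) : Module.End ℂ Pst :=
  (lam ^ i * al) • shiftST i (-2)

/-- The operator by which `e_i` acts on `Θ(λ,α,β,γ)`: `g(s,t) ↦ λ^i α (t/2+β) g(s-i,t-2)`. -/
def thetaE (lam al be : ℂ) (i : ℤ) : Module.End ℂ Pst :=
  (lam ^ i * al) • (LinearMap.mulLeft ℂ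
    (MvPolynomial.C (2⁻¹ : ℂ) * tVar + MvPolynomial.C be) ∘ₗ shiftST i 2)

/-- The operator by which `f_i` acts on `Θ(λ,α,β,γ)`: `g(s,t) ↦ -(λ^i/α)(t/2-β) g(s-i,t+2)`. -/
def thetaF (lam al be : ℂ) (i : ℤ) : Module.End ℂ Pst :=
  (-(lam ^ i / al)) • (LinearMap.mulLeft ℂ
    (MvPolynomial.C (2⁻¹ : ℂ) * tVar - MvPolynomial.C be) ∘ₗ shiftST i (-2))

/-- `M` is an 𝔏-module whose underlying space is ℂ[s,t] (via the linear equivalence `φ`) and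
on which the basis elements of 𝔏 act by the prescribed families of operators (`C` acting by
zero). -/
def ActsAs {L : Type} [LieRing L] [LieAlgebra ℂ L] (A : AVAlgebra L)
    (M : Type) [AddCommGroup M] [Module ℂ M] [LieRingModule L M]
    (φ : M ≃ₗ[ℂ] Pst) (Fe Ff Fh Fd : ℤ → Module.End ℂ Pst) : Prop :=
  (∀ (i : ℤ) (m : M), φ ⁅A.e i, m⁆ = Fe i (φ m)) ∧
  (∀ (i : ℤ) (m : M), φ ⁅A.f i, m⁆ = Ff i (φ m)) ∧
  (∀ (i : ℤ) (m : M), φ ⁅A.h i, m⁆ = Fh i (φ m)) ∧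
  (∀ (i : ℤ) (m : M), φ ⁅A.d i, m⁆ = Fd i (φ m)) ∧
  (∀ m : M, ⁅A.cC, m⁆ = 0)

/-- `M` is (a copy of) the 𝔏-module `Ω(λ,α,β,γ)`. -/
def IsOmega {L : Type} [LieRing L] [LieAlgebra ℂ L] (A : AVAlgebra L)
    (lam al be ga : ℂ) (M : Type) [AddCommGroup M] [Module ℂ M] [LieRingModule L M]
    (φ : M ≃ₗ[ℂ] Pst) : Prop :=
  ActsAs A M φ (omegaE lam al) (omegaF lam al be) (hOp lam) (dOp lam ga)

/-- `M` is (a copy of) the 𝔏-module `Δ(λ,α,β,γ)`. -/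
def IsDelta {L : Type} [LieRing L] [LieAlgebra ℂ L] (A : AVAlgebra L)
    (lam al be ga : ℂ) (M : Type) [AddCommGroup M] [Module ℂ M] [LieRingModule L M]
    (φ : M ≃ₗ[ℂ] Pst) : Prop :=
  ActsAs A M φ (deltaE lam al be) (deltaF lam al) (hOp lam) (dOp lam ga)

/-- `M` is (a copy of) the 𝔏-module `Θ(λ,α,β,γ)`. -/
def IsTheta {L : Type} [LieRing L] [LieAlgebra ℂ L] (A : AVAlgebra L)
    (lam al be ga : ℂ) (M : Type) [AddCommGroup M] [Module ℂ M] [LieRingModule L M]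
    (φ : M ≃ₗ[ℂ] Pst) : Prop :=
  ActsAs A M φ (thetaE lam al be) (thetaF lam al be) (hOp lam) (dOp lam ga)

namespace AVProof
open Polynomial

abbrev Rt : Type := Polynomial ℂ
abbrev Ast : Type := Polynomial Rt

/-- shift on `ℂ[t]`: `r(X) ↦ r(X - c)`. -/
def ShR (c : ℂ) : Rt →ₐ[ℂ] Rt := Polynomial.aeval (X - C c)

/-- shift on `ℂ[t][s]`. -/
def ShA (a c : ℂ) : Ast →ₐ[ℂ] Ast :=
  Polynomial.aevalTower ((Polynomial.CAlgHom).comp (ShR c)) (X - C (C a))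

@[simp] lemma ShR_X (c : ℂ) : ShR c X = X - C c := by simp [ShR]
@[simp] lemma ShR_C (c z : ℂ) : ShR c (C z) = C z := by
  simp [ShR, Polynomial.algebraMap_eq]
@[simp] lemma ShA_X (a c : ℂ) : ShA a c X = X - C (C a) := aevalTower_X _ _
@[simp] lemma ShA_C (a c : ℂ) (r : Rt) : ShA a c (C r) = C (ShR c r) := aevalTower_C _ _ _

lemma ShR_comp_eq (c : ℂ) (r : Rt) : ShR c r = r.comp (X - C c) := rfl

lemma eval_ShR (c z : ℂ) (r : Rt) : (ShR c r).eval z = r.eval (z - c) := by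
  rw [ShR_comp_eq, eval_comp]; simp

lemma ShR_ShR (c d : ℂ) (r : Rt) : ShR c (ShR d r) = ShR (c + d) r := by
  have h : (ShR c).comp (ShR d) = ShR (c + d) := by
    apply Polynomial.algHom_ext
    simp [sub_sub, map_add]
  exact AlgHom.congr_fun h r

@[simp] lemma ShR_zero (r : Rt) : ShR 0 r = r := by
  have h : ShR (0:ℂ) = AlgHom.id ℂ Rt := by
    apply Polynomial.algHom_ext; simp
  rw [h]; rfl

lemma ShR_injective (c : ℂ) : Function.Injective (ShR c) := by
  intro x y h
  have := congrArg (ShR (-c)) h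
  rwa [ShR_ShR, ShR_ShR, neg_add_cancel, ShR_zero, ShR_zero] at this

lemma ShA_ShA (a c a' c' : ℂ) (g : Ast) :
    ShA a c (ShA a' c' g) = ShA (a + a') (c + c') g := by
  have h : (ShA a c).comp (ShA a' c') = ShA (a + a') (c + c') := by
    apply Polynomial.algHom_ext'
    · apply Polynomial.algHom_ext
      simp [ShR_ShR, sub_sub]
    · simp [sub_sub, ← map_add]
  exact AlgHom.congr_fun h g

@[simp] lemma ShA_zero_zero (g : Ast) : ShA 0 0 g = g := by
  have h : ShA (0:ℂ) 0 = AlgHom.id ℂ Ast := by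
    apply Polynomial.algHom_ext'
    · apply Polynomial.algHom_ext; simp
    · simp
  rw [h]; rfl

lemma ShA_map (c : ℂ) (g : Ast) : ShA 0 c g = g.map (ShR c).toRingHom := by
  have h : (ShA (0:ℂ) c).toRingHom = Polynomial.mapRingHom (ShR c).toRingHom := by
    apply Polynomial.ringHom_ext'
    · refine RingHom.ext fun r => ?_
      simp [ShA_C, Polynomial.coe_mapRingHom]
    · simp [ShA_X]
  exact RingHom.congr_fun h g

lemma natDegree_ShA (c : ℂ) (g : Ast) : (ShA 0 c g).natDegree = g.natDegree := by
  rw [ShA_map]; exact natDegree_map_eq_of_injective (ShR_injective c) g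

lemma ShA_comp_repr (a : ℂ) (g : Ast) : ShA a 0 g = g.comp (X - C (C a)) := by
  have h : (ShA a (0:ℂ)).toRingHom = Polynomial.eval₂RingHom Polynomial.C (X - C (C a)) := by
    apply Polynomial.ringHom_ext'
    · refine RingHom.ext fun r => ?_
      simp [ShA_C, ShR_zero]
    · simp [ShA_X]
  exact RingHom.congr_fun h g

lemma degree_comp_sub_lt (u : Ast) (hu : u.natDegree ≠ 0) (a : ℂ) :
    (u.comp (X - C (C a)) - u).degree < u.degree := by
  have hu0 : u ≠ 0 := fun h => hu (by simp [h])
  have hq1 : (X - C (C a) : Ast).natDegree = 1 := natDegree_X_sub_C _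
  have hnd : (u.comp (X - C (C a))).natDegree = u.natDegree := by
    rw [natDegree_comp, hq1, mul_one]
  have hlc : (u.comp (X - C (C a))).leadingCoeff = u.leadingCoeff := by
    rw [leadingCoeff_comp (by rw [hq1]; exact one_ne_zero)]
    rw [(monic_X_sub_C (C a)).leadingCoeff, one_pow, mul_one]
  have hc0 : u.comp (X - C (C a)) ≠ 0 := fun h => hu (by rw [← hnd, h, natDegree_zero])
  have hdeg : (u.comp (X - C (C a))).degree = u.degree := by
    rw [degree_eq_natDegree hc0, degree_eq_natDegree hu0, hnd]
  calc (u.comp (X - C (C a)) - u).degree < (u.comp (X - C (C a))).degree :=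
        degree_sub_lt hdeg hc0 hlc
    _ = u.degree := hdeg

lemma natDegree_eq_zero_of_forall_comp (u : Ast)
    (h : ∀ i : ℤ, u.comp (X - C (C (i : ℂ))) = u) : u.natDegree = 0 := by
  have hval : ∀ i : ℤ, u.eval (-C (i:ℂ)) = u.eval 0 := by
    intro i
    have := congrArg (Polynomial.eval (0 : Rt)) (h i)
    rwa [eval_comp, eval_sub, eval_X, eval_C, zero_sub] at this
  have hroot : ∀ i : ℤ, (u - C (u.eval 0)).IsRoot (-C (i:ℂ)) := by
    intro i
    simp only [IsRoot, eval_sub, eval_C, sub_eq_zero]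
    exact hval i
  have hzero : u - C (u.eval 0) = 0 := by
    apply Polynomial.eq_zero_of_infinite_isRoot
    apply Set.infinite_of_injective_forall_mem
      (f := fun i : ℤ => (-C (i:ℂ) : Rt))
    · intro i j hij
      have h2 : (C ((i:ℂ)) : Rt) = C ((j:ℂ)) := neg_injective hij
      have h3 : ((i:ℂ)) = ((j:ℂ)) := Polynomial.C_injective h2
      exact_mod_cast h3
    · intro i; exact hroot i
  have : u = C (u.eval 0) := by linear_combination (norm := ring_nf) hzero
  rw [this, natDegree_C]

section key1
variable (V : Submodule ℂ Ast) (m : Rt) (c : ℂ)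

lemma base_case (hm : m ≠ 0) (hcl : ∀ (i : ℤ), ∀ g ∈ V, C m * ShA (i:ℂ) c g ∈ V)
    (g : Ast) (hg : g ∈ V) (hg0 : g ≠ 0) (h0 : g.natDegree = 0) :
    ∃ p : Rt, p ≠ 0 ∧ (C p : Ast) ∈ V := by
  obtain ⟨r, hr⟩ := natDegree_eq_zero.mp h0
  refine ⟨m * ShR c r, ?_, ?_⟩
  · have hr0 : r ≠ 0 := by rintro rfl; simp [← hr] at hg0
    exact mul_ne_zero hm (fun h => hr0 (ShR_injective c (by simpa using h)))
  · have := hcl 0 g hg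
    rw [← hr] at this
    rw [Int.cast_zero, ShA_C, ← map_mul] at this
    exact this

lemma exists_C_mem (hm : m ≠ 0) (hcl : ∀ (i : ℤ), ∀ g ∈ V, C m * ShA (i:ℂ) c g ∈ V) :
    ∀ (n : ℕ) (g : Ast), g ∈ V → g ≠ 0 → g.natDegree ≤ n →
      ∃ p : Rt, p ≠ 0 ∧ (C p : Ast) ∈ V := by
  intro n
  induction n with
  | zero =>
    intro g hg hg0 hdeg
    exact base_case V m c hm hcl g hg hg0 (Nat.le_zero.mp hdeg)
  | succ n ih =>
    intro g hg hg0 hdeg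
    by_cases h0 : g.natDegree = 0
    · exact base_case V m c hm hcl g hg hg0 h0
    · set u : Ast := ShA 0 c g with hu_def
      have hundeg : u.natDegree = g.natDegree := natDegree_ShA c g
      have hiu : ∀ i : ℤ, ShA (i:ℂ) c g = u.comp (X - C (C (i:ℂ))) := by
        intro i
        rw [← ShA_comp_repr, hu_def, ShA_ShA, add_zero, zero_add]
      by_cases hall : ∀ i : ℤ, u.comp (X - C (C (i:ℂ))) = u
      · exact absurd (natDegree_eq_zero_of_forall_comp u hall) (hundeg ▸ h0)
      · push_neg at hall
        obtain ⟨i, hi⟩ := hall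
        set v : Ast := u.comp (X - C (C (i:ℂ))) - u with hv_def
        have hv0 : v ≠ 0 := sub_ne_zero.mpr hi
        have hCm : (C m : Ast) ≠ 0 := fun h => hm (by simpa using h)
        have hmem : C m * v ∈ V := by
          have h1 := hcl i g hg
          have h2 := hcl 0 g hg
          rw [hiu i] at h1
          rw [Int.cast_zero] at h2
          have h2' : C m * u ∈ V := h2
          have := V.sub_mem h1 h2'
          rwa [← mul_sub] at this
        have hne : C m * v ≠ 0 := mul_ne_zero hCm hv0
        have hdegv : v.natDegree < g.natDegree := by
          rw [← hundeg]
          exact natDegree_lt_natDegree hv0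
            (degree_comp_sub_lt u (hundeg ▸ h0) (i:ℂ))
        have hdeg2 : (C m * v).natDegree ≤ n := by
          rw [natDegree_mul hCm hv0, natDegree_C, zero_add]
          omega
        exact ih (C m * v) hmem hne hdeg2

end key1

lemma mul_mem_closure (V : Submodule ℂ Ast)
    (hX : ∀ v ∈ V, (X : Ast) * v ∈ V) (hC : ∀ v ∈ V, (C X : Ast) * v ∈ V) :
    ∀ (a : Ast), ∀ v ∈ V, a * v ∈ V := by
  have hCr : ∀ (r : Rt), ∀ v ∈ V, (C r : Ast) * v ∈ V := by
    intro r
    induction r using Polynomial.induction_on with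
    | C z =>
      intro v hv
      have : (C (C z) : Ast) * v = z • v := by
        rw [Algebra.smul_def]
        congr 1
      rw [this]; exact V.smul_mem z hv
    | add p q hp hq =>
      intro v hv
      rw [map_add, add_mul]
      exact V.add_mem (hp v hv) (hq v hv)
    | monomial n z hz =>
      intro v hv
      have : (C (C z * X ^ (n+1)) : Ast) * v = C X * (C (C z * X ^ n) * v) := by
        simp only [pow_succ, map_mul, map_pow]
        ring
      rw [this]
      exact hC _ (hz v hv)
  intro a
  induction a using Polynomial.induction_on with
  | C r => exact hCr r
  | add p q hp hq =>
    intro v hv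
    rw [add_mul]
    exact V.add_mem (hp v hv) (hq v hv)
  | monomial n r hr =>
    intro v hv
    have : (C r * X ^ (n+1) : Ast) * v = X * ((C r * X ^ n) * v) := by ring
    rw [this]
    exact hX _ (hr v hv)

lemma one_mem_of_span (V : Submodule ℂ Ast)
    (hmul : ∀ (a : Ast), ∀ v ∈ V, a * v ∈ V)
    (S : Set Rt) (hS : ∀ r ∈ S, (C r : Ast) ∈ V) (hspan : Ideal.span S = ⊤) :
    (1 : Ast) ∈ V := by
  let J : Ideal Rt :=
    { carrier := {r : Rt | (C r : Ast) ∈ V}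
      add_mem' := fun {x y} hx hy => by
        simp only [Set.mem_setOf_eq, map_add] at *
        exact V.add_mem hx hy
      zero_mem' := by simp only [Set.mem_setOf_eq, map_zero]; exact V.zero_mem
      smul_mem' := fun r x hx => by
        simp only [Set.mem_setOf_eq, smul_eq_mul, map_mul] at *
        exact hmul (C r) _ hx }
  have hle : Ideal.span S ≤ J := Ideal.span_le.mpr hS
  have h1 : (1:Rt) ∈ J := by rw [hspan] at hle; exact hle trivial
  simpa using (show (C (1:Rt) : Ast) ∈ V from h1)

lemma span_top_of_no_common_root (S : Set Rt) (p₀ : Rt) (hp₀S : p₀ ∈ S) (hp₀ : p₀ ≠ 0)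
    (h : ∀ z : ℂ, ¬ (∀ r ∈ S, r.eval z = 0)) : Ideal.span S = ⊤ := by
  by_contra hI
  obtain ⟨g, hgen⟩ := Submodule.IsPrincipal.principal (Ideal.span S)
  rw [Ideal.submodule_span_eq] at hgen
  have hgu : ¬ IsUnit g := by
    intro hg
    exact hI (by rw [hgen]; exact Ideal.span_singleton_eq_top.mpr hg)
  have hg0 : g ≠ 0 := by
    rintro rfl
    have := hgen ▸ Ideal.subset_span hp₀S
    rw [Ideal.span_singleton_eq_bot.mpr rfl] at this
    exact hp₀ this
  have hdeg : 0 < g.degree := by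
    rcases lt_or_eq_of_le (zero_le_degree_iff.mpr hg0) with h' | h'
    · exact h'
    · exact absurd (isUnit_iff_degree_eq_zero.mpr h'.symm) hgu
  obtain ⟨z, hz⟩ := Complex.exists_root hdeg
  apply h z
  intro r hr
  have hmem : r ∈ Ideal.span {g} := hgen ▸ Ideal.subset_span hr
  rw [Ideal.mem_span_singleton] at hmem
  exact hz.dvd hmem

/-- the linear polynomial `t/2 + c`. -/
def lin (c : ℂ) : Rt := C (2⁻¹ : ℂ) * X + C c

lemma ShR_lin (b c : ℂ) : ShR b (lin c) = lin (c - 2⁻¹ * b) := by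
  rw [lin, lin, map_add, map_mul, ShR_C, ShR_C, ShR_X]
  rw [mul_sub, ← map_mul]
  rw [show (c - 2⁻¹ * b : ℂ) = c + -(2⁻¹ * b) by ring, map_add]
  rw [map_neg]
  ring

lemma eval_lin (c z : ℂ) : (lin c).eval z = 2⁻¹ * z + c := by simp [lin]

lemma lin_ne_zero (c : ℂ) : lin c ≠ 0 := by
  intro h
  have := congrArg (Polynomial.eval (2 * (1 - c))) h
  rw [eval_lin, eval_zero] at this
  have h2 : (2:ℂ)⁻¹ * (2 * (1 - c)) + c = 1 := by field_simp; ring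
  rw [h2] at this
  exact one_ne_zero this

lemma lin_root (c z : ℂ) (h : (lin c).eval z = 0) : z = -2 * c := by
  rw [eval_lin] at h
  field_simp at h
  linear_combination h

/-- iterated application of `r ↦ m * (ShR c r)`. -/
def iterSeq (m : Rt) (c : ℂ) (p : Rt) : ℕ → Rt
  | 0 => p
  | (k+1) => m * ShR c (iterSeq m c p k)

lemma iterSeq_root (m : Rt) (c : ℂ) (p : Rt) (z : ℂ) :
    ∀ k : ℕ, (iterSeq m c p k).eval z = 0 →
      (∃ j : ℕ, m.eval (z - (j:ℂ) * c) = 0) ∨ p.eval (z - (k:ℂ) * c) = 0 := by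
  intro k
  induction k generalizing z with
  | zero =>
    intro h
    right
    simpa [iterSeq] using h
  | succ k ih =>
    intro h
    rw [iterSeq, eval_mul, eval_ShR] at h
    rcases mul_eq_zero.mp h with h1 | h2
    · exact Or.inl ⟨0, by simpa using h1⟩
    · rcases ih (z - c) h2 with ⟨j, hj⟩ | hp
      · refine Or.inl ⟨j + 1, ?_⟩
        convert hj using 2
        push_cast
        ring
      · right
        convert hp using 2
        push_cast
        ring

lemma C_iterSeq_mem (V : Submodule ℂ Ast) (m : Rt) (c : ℂ) (p : Rt)
    (hcl0 : ∀ g ∈ V, C m * ShA 0 c g ∈ V) (hp : (C p : Ast) ∈ V) :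
    ∀ k, (C (iterSeq m c p k) : Ast) ∈ V := by
  intro k
  induction k with
  | zero => exact hp
  | succ k ih =>
    have := hcl0 _ ih
    rwa [ShA_C, ← map_mul] at this

lemma eval_shifts_ne_zero (p : Rt) (hp : p ≠ 0) (z c : ℂ) (hc : c ≠ 0) :
    ∃ k : ℕ, p.eval (z - (k:ℂ) * c) ≠ 0 := by
  by_contra hcon
  push_neg at hcon
  apply hp
  apply Polynomial.eq_zero_of_infinite_isRoot
  apply Set.infinite_of_injective_forall_mem (f := fun k : ℕ => z - (k:ℂ) * c)
  · intro a b hab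
    have h1 : (a:ℂ) * c = (b:ℂ) * c := by linear_combination -hab
    have h2 := mul_right_cancel₀ hc h1
    exact_mod_cast h2
  · intro k; exact hcon k

lemma submodule_top_simple (V : Submodule ℂ Ast) (c : ℂ) (hc : c ≠ 0)
    (g0 : Ast) (hg0V : g0 ∈ V) (hg00 : g0 ≠ 0)
    (hX : ∀ v ∈ V, (X:Ast) * v ∈ V) (hCX : ∀ v ∈ V, (C X:Ast) * v ∈ V)
    (hE : ∀ i : ℤ, ∀ v ∈ V, ShA (i:ℂ) c v ∈ V) : V = ⊤ := by
  have hcl : ∀ (i : ℤ), ∀ g ∈ V, C (1:Rt) * ShA (i:ℂ) c g ∈ V := by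
    intro i g hg; rw [map_one, one_mul]; exact hE i g hg
  obtain ⟨p, hp0, hpV⟩ :=
    exists_C_mem V 1 c one_ne_zero hcl g0.natDegree g0 hg0V hg00 le_rfl
  have hmul := mul_mem_closure V hX hCX
  have hcl0 : ∀ g ∈ V, C (1:Rt) * ShA 0 c g ∈ V := by
    intro g hg
    have := hcl 0 g hg
    rwa [Int.cast_zero] at this
  set S : Set Rt := Set.range (iterSeq 1 c p) with hS
  have hSV : ∀ r ∈ S, (C r : Ast) ∈ V := by
    rintro r ⟨k, rfl⟩
    exact C_iterSeq_mem V 1 c p hcl0 hpV k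
  have hspan : Ideal.span S = ⊤ := by
    apply span_top_of_no_common_root S p ⟨0, rfl⟩ hp0
    intro z hz
    obtain ⟨k, hk⟩ := eval_shifts_ne_zero p hp0 z c hc
    rcases iterSeq_root 1 c p z k (hz _ ⟨k, rfl⟩) with ⟨j, hj⟩ | hk'
    · simp at hj
    · exact hk hk'
  have h1 : (1:Ast) ∈ V := one_mem_of_span V hmul S hSV hspan
  rw [eq_top_iff]
  intro a _
  simpa using hmul a 1 h1

lemma submodule_top_theta (V : Submodule ℂ Ast) (be : ℂ)
    (hbe : ¬ ∃ n : ℕ, 2 * be = (n:ℂ))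
    (g0 : Ast) (hg0V : g0 ∈ V) (hg00 : g0 ≠ 0)
    (hX : ∀ v ∈ V, (X:Ast) * v ∈ V) (hCX : ∀ v ∈ V, (C X:Ast) * v ∈ V)
    (hE : ∀ i : ℤ, ∀ v ∈ V, C (lin be) * ShA (i:ℂ) 2 v ∈ V)
    (hF : ∀ i : ℤ, ∀ v ∈ V, C (lin (-be)) * ShA (i:ℂ) (-2) v ∈ V) : V = ⊤ := by
  obtain ⟨p, hp0, hpV⟩ :=
    exists_C_mem V (lin be) 2 (lin_ne_zero be) hE g0.natDegree g0 hg0V hg00 le_rfl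
  have hmul := mul_mem_closure V hX hCX
  have hclE0 : ∀ g ∈ V, C (lin be) * ShA 0 2 g ∈ V := by
    intro g hg; have := hE 0 g hg; rwa [Int.cast_zero] at this
  have hclF0 : ∀ g ∈ V, C (lin (-be)) * ShA 0 (-2) g ∈ V := by
    intro g hg; have := hF 0 g hg; rwa [Int.cast_zero] at this
  set Sa : Set Rt := Set.range (iterSeq (lin be) 2 p) with hSa
  set Sb : Set Rt := Set.range (iterSeq (lin (-be)) (-2) p) with hSb
  have hSV : ∀ r ∈ Sa ∪ Sb, (C r : Ast) ∈ V := by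
    rintro r (⟨k, rfl⟩ | ⟨k, rfl⟩)
    · exact C_iterSeq_mem V _ _ p hclE0 hpV k
    · exact C_iterSeq_mem V _ _ p hclF0 hpV k
  have hspan : Ideal.span (Sa ∪ Sb) = ⊤ := by
    apply span_top_of_no_common_root _ p (Or.inl ⟨0, rfl⟩) hp0
    intro z hz
    obtain ⟨k1, hk1⟩ := eval_shifts_ne_zero p hp0 z 2 two_ne_zero
    obtain ⟨k2, hk2⟩ := eval_shifts_ne_zero p hp0 z (-2) (neg_ne_zero.mpr two_ne_zero)
    rcases iterSeq_root (lin be) 2 p z k1 (hz _ (Or.inl ⟨k1, rfl⟩)) with ⟨j1, hj1⟩ | h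
    swap
    · exact hk1 h
    rcases iterSeq_root (lin (-be)) (-2) p z k2 (hz _ (Or.inr ⟨k2, rfl⟩)) with ⟨j2, hj2⟩ | h
    swap
    · exact hk2 h
    have e1 : z - (j1:ℂ) * 2 = -2 * be := lin_root _ _ hj1
    have e2 : z - (j2:ℂ) * (-2) = -2 * (-be) := lin_root _ _ hj2
    refine hbe ⟨j1 + j2, ?_⟩
    push_cast
    linear_combination (e1 - e2) / 2
  have h1 : (1:Ast) ∈ V := one_mem_of_span V hmul _ hSV hspan
  rw [eq_top_iff]
  intro a _
  simpa using hmul a 1 h1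

/-! ### The bridge `ℂ[s,t] ≃ ℂ[t][s]` -/

/-- ℂ[s,t] → ℂ[t][s]. -/
def EA : Pst →ₐ[ℂ] Ast := MvPolynomial.aeval ![(X : Ast), C X]

/-- ℂ[t][s] → ℂ[s,t]. -/
def EI : Ast →ₐ[ℂ] Pst := Polynomial.aevalTower (Polynomial.aeval tVar) sVar

@[simp] lemma EA_sVar : EA sVar = X := by simp [EA, sVar]
@[simp] lemma EA_tVar : EA tVar = C X := by simp [EA, tVar]
@[simp] lemma EA_C (z : ℂ) : EA (MvPolynomial.C z) = C (C z) := by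
  simp [EA, Polynomial.algebraMap_eq]

lemma EI_EA : ∀ w : Pst, EI (EA w) = w := by
  have h : EI.comp EA = AlgHom.id ℂ Pst := by
    apply MvPolynomial.algHom_ext
    intro i
    fin_cases i
    · simp [EA, EI, sVar]
    · simp [EA, EI, tVar]
  exact fun w => AlgHom.congr_fun h w

lemma EA_EI : ∀ g : Ast, EA (EI g) = g := by
  have h : EA.comp EI = AlgHom.id ℂ Ast := by
    apply Polynomial.algHom_ext'
    · apply Polynomial.algHom_ext
      simp [EI]
    · simp [EI]
  exact fun g => AlgHom.congr_fun h g

lemma EA_shift (a b : ℂ) (w : Pst) : EA (shiftST a b w) = ShA a b (EA w) := by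
  have h : EA.comp (MvPolynomial.aeval ![sVar - MvPolynomial.C a, tVar - MvPolynomial.C b])
      = (ShA a b).comp EA := by
    apply MvPolynomial.algHom_ext
    intro i
    fin_cases i
    · simp [EA, MvPolynomial.aeval_X, sVar, tVar, ShA_X, ShA_C, ShR_X, Polynomial.algebraMap_eq]
    · simp [EA, MvPolynomial.aeval_X, sVar, tVar, ShA_X, ShA_C, ShR_X, Polynomial.algebraMap_eq]
  exact AlgHom.congr_fun h w

/-- The bridge as a linear equivalence. -/
def EAeq : Pst ≃ₗ[ℂ] Ast :=
  LinearEquiv.ofLinear EA.toLinearMap EI.toLinearMap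
    (LinearMap.ext fun g => EA_EI g) (LinearMap.ext fun w => EI_EA w)

/-! ### Transport of the operators -/

lemma EA_dOp (lam ga : ℂ) (i : ℤ) (w : Pst) :
    EA (dOp lam ga i w) = lam ^ i • ((X + C (C ((i:ℂ) * ga))) * ShA (i:ℂ) 0 (EA w)) := by
  simp only [dOp, LinearMap.smul_apply, LinearMap.coe_comp, Function.comp_apply,
    LinearMap.mulLeft_apply, map_smul, map_mul, map_add, EA_sVar, EA_C, EA_shift]

lemma EA_hOp (lam : ℂ) (i : ℤ) (w : Pst) :
    EA (hOp lam i w) = lam ^ i • ((C X : Ast) * ShA (i:ℂ) 0 (EA w)) := by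
  simp only [hOp, LinearMap.smul_apply, LinearMap.coe_comp, Function.comp_apply,
    LinearMap.mulLeft_apply, map_smul, map_mul, EA_tVar, EA_shift]

lemma EA_omegaE (lam al : ℂ) (i : ℤ) (w : Pst) :
    EA (omegaE lam al i w) = (lam ^ i * al) • ShA (i:ℂ) 2 (EA w) := by
  simp only [omegaE, LinearMap.smul_apply, map_smul, EA_shift]

lemma EA_deltaF (lam al : ℂ) (i : ℤ) (w : Pst) :
    EA (deltaF lam al i w) = (lam ^ i * al) • ShA (i:ℂ) (-2) (EA w) := by
  simp only [deltaF, LinearMap.smul_apply, map_smul, EA_shift]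

lemma EA_thetaE (lam al be : ℂ) (i : ℤ) (w : Pst) :
    EA (thetaE lam al be i w) = (lam ^ i * al) • ((C (lin be) : Ast) * ShA (i:ℂ) 2 (EA w)) := by
  simp only [thetaE, LinearMap.smul_apply, LinearMap.coe_comp, Function.comp_apply,
    LinearMap.mulLeft_apply, map_smul, map_mul, map_add, EA_tVar, EA_C, EA_shift, lin]

lemma EA_thetaF (lam al be : ℂ) (i : ℤ) (w : Pst) :
    EA (thetaF lam al be i w)
      = (-(lam ^ i / al)) • ((C (lin (-be)) : Ast) * ShA (i:ℂ) (-2) (EA w)) := by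
  simp only [thetaF, LinearMap.smul_apply, LinearMap.coe_comp, Function.comp_apply,
    LinearMap.mulLeft_apply, map_smul, map_mul, map_sub, map_add, map_neg,
    EA_tVar, EA_C, EA_shift, lin, sub_eq_add_neg]

end AVProof

namespace AVProof
open Polynomial

section Modules

variable {L : Type} [LieRing L] [LieAlgebra ℂ L] (A : AVAlgebra L)
variable (lam al be ga : ℂ)
variable {M : Type} [AddCommGroup M] [Module ℂ M] [LieRingModule L M] [LieModule ℂ L M]

lemma psi_inj (φ : M ≃ₗ[ℂ] Pst) : Function.Injective (φ.trans EAeq) :=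
  (φ.trans EAeq).injective

lemma lie_top_of_map_top (φ : M ≃ₗ[ℂ] Pst) (N : LieSubmodule ℂ L M)
    (h : Submodule.map ((φ.trans EAeq : M ≃ₗ[ℂ] Ast) : M →ₗ[ℂ] Ast)
        (N : Submodule ℂ M) = ⊤) : N = ⊤ := by
  set ψ := φ.trans EAeq
  apply LieSubmodule.ext
  intro x
  simp only [LieSubmodule.mem_top, iff_true]
  have : ψ x ∈ Submodule.map (ψ : M →ₗ[ℂ] Ast) (N : Submodule ℂ M) := by
    rw [h]; exact Submodule.mem_top
  obtain ⟨n, hn, he⟩ := this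
  have : n = x := ψ.injective he
  rw [← this]
  exact (LieSubmodule.mem_toSubmodule N).mp hn

lemma omega_N_top (hlam : lam ≠ 0) (hal : al ≠ 0)
    (φ : M ≃ₗ[ℂ] Pst) (hO : IsOmega A lam al be ga M φ)
    (N : LieSubmodule ℂ L M) (hN : N ≠ ⊥) : N = ⊤ := by
  obtain ⟨hOe, hOf, hOh, hOd, hOc⟩ := hO
  set ψ : M ≃ₗ[ℂ] Ast := φ.trans EAeq with hψdef
  have hpsi : ∀ m : M, ψ m = EA (φ m) := fun _ => rfl
  set V : Submodule ℂ Ast := Submodule.map (ψ : M →ₗ[ℂ] Ast) (N : Submodule ℂ M) with hVdef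
  have hmem : ∀ {x : M}, x ∈ N → ψ x ∈ V := fun {x} hx =>
    Submodule.mem_map_of_mem ((LieSubmodule.mem_toSubmodule N).mpr hx)
  rw [Ne, LieSubmodule.eq_bot_iff] at hN
  push_neg at hN
  obtain ⟨n0, hn0N, hn00⟩ := hN
  have hg00 : ψ n0 ≠ 0 := fun h => hn00 (by
    have := ψ.injective (h.trans (map_zero ψ).symm)
    exact this)
  have hX : ∀ v ∈ V, (X:Ast) * v ∈ V := by
    rintro v ⟨n, hn, rfl⟩
    have hn' : n ∈ N := (LieSubmodule.mem_toSubmodule N).mp hn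
    simp only [LinearEquiv.coe_coe]
    have hb : ψ ⁅A.d 0, n⁆ = X * ψ n := by
      rw [hpsi, hpsi, hOd 0 n, EA_dOp]
      simp
    rw [← hb]; exact hmem (N.lie_mem hn')
  have hCX : ∀ v ∈ V, (C X:Ast) * v ∈ V := by
    rintro v ⟨n, hn, rfl⟩
    have hn' : n ∈ N := (LieSubmodule.mem_toSubmodule N).mp hn
    simp only [LinearEquiv.coe_coe]
    have hb : ψ ⁅A.h 0, n⁆ = C X * ψ n := by
      rw [hpsi, hpsi, hOh 0 n, EA_hOp]
      simp
    rw [← hb]; exact hmem (N.lie_mem hn')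
  have hE : ∀ i : ℤ, ∀ v ∈ V, ShA (i:ℂ) 2 v ∈ V := by
    rintro i v ⟨n, hn, rfl⟩
    have hn' : n ∈ N := (LieSubmodule.mem_toSubmodule N).mp hn
    simp only [LinearEquiv.coe_coe]
    have hne : lam ^ i * al ≠ 0 := mul_ne_zero (zpow_ne_zero i hlam) hal
    have hb : ShA (i:ℂ) 2 (ψ n) = (lam ^ i * al)⁻¹ • ψ ⁅A.e i, n⁆ := by
      rw [hpsi, hpsi, hOe i n, EA_omegaE, smul_smul, inv_mul_cancel₀ hne, one_smul]
    rw [hb]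
    exact V.smul_mem _ (hmem (N.lie_mem hn'))
  have hVtop : V = ⊤ :=
    submodule_top_simple V 2 two_ne_zero (ψ n0) (hmem hn0N) hg00 hX hCX hE
  exact lie_top_of_map_top φ N hVtop

lemma delta_N_top (hlam : lam ≠ 0) (hal : al ≠ 0)
    (φ : M ≃ₗ[ℂ] Pst) (hD : IsDelta A lam al be ga M φ)
    (N : LieSubmodule ℂ L M) (hN : N ≠ ⊥) : N = ⊤ := by
  obtain ⟨hDe, hDf, hDh, hDd, hDc⟩ := hD
  set ψ : M ≃ₗ[ℂ] Ast := φ.trans EAeq with hψdef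
  have hpsi : ∀ m : M, ψ m = EA (φ m) := fun _ => rfl
  set V : Submodule ℂ Ast := Submodule.map (ψ : M →ₗ[ℂ] Ast) (N : Submodule ℂ M) with hVdef
  have hmem : ∀ {x : M}, x ∈ N → ψ x ∈ V := fun {x} hx =>
    Submodule.mem_map_of_mem ((LieSubmodule.mem_toSubmodule N).mpr hx)
  rw [Ne, LieSubmodule.eq_bot_iff] at hN
  push_neg at hN
  obtain ⟨n0, hn0N, hn00⟩ := hN
  have hg00 : ψ n0 ≠ 0 := fun h => hn00 (ψ.injective (h.trans (map_zero ψ).symm))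
  have hX : ∀ v ∈ V, (X:Ast) * v ∈ V := by
    rintro v ⟨n, hn, rfl⟩
    have hn' : n ∈ N := (LieSubmodule.mem_toSubmodule N).mp hn
    simp only [LinearEquiv.coe_coe]
    have hb : ψ ⁅A.d 0, n⁆ = X * ψ n := by
      rw [hpsi, hpsi, hDd 0 n, EA_dOp]
      simp
    rw [← hb]; exact hmem (N.lie_mem hn')
  have hCX : ∀ v ∈ V, (C X:Ast) * v ∈ V := by
    rintro v ⟨n, hn, rfl⟩
    have hn' : n ∈ N := (LieSubmodule.mem_toSubmodule N).mp hn
    simp only [LinearEquiv.coe_coe]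
    have hb : ψ ⁅A.h 0, n⁆ = C X * ψ n := by
      rw [hpsi, hpsi, hDh 0 n, EA_hOp]
      simp
    rw [← hb]; exact hmem (N.lie_mem hn')
  have hF : ∀ i : ℤ, ∀ v ∈ V, ShA (i:ℂ) (-2) v ∈ V := by
    rintro i v ⟨n, hn, rfl⟩
    have hn' : n ∈ N := (LieSubmodule.mem_toSubmodule N).mp hn
    simp only [LinearEquiv.coe_coe]
    have hne : lam ^ i * al ≠ 0 := mul_ne_zero (zpow_ne_zero i hlam) hal
    have hb : ShA (i:ℂ) (-2) (ψ n) = (lam ^ i * al)⁻¹ • ψ ⁅A.f i, n⁆ := by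
      rw [hpsi, hpsi, hDf i n, EA_deltaF, smul_smul, inv_mul_cancel₀ hne, one_smul]
    rw [hb]
    exact V.smul_mem _ (hmem (N.lie_mem hn'))
  have hVtop : V = ⊤ :=
    submodule_top_simple V (-2) (neg_ne_zero.mpr two_ne_zero) (ψ n0) (hmem hn0N) hg00 hX hCX hF
  exact lie_top_of_map_top φ N hVtop

lemma theta_N_top (hlam : lam ≠ 0) (hal : al ≠ 0)
    (hbe : ¬ ∃ n : ℕ, 2 * be = (n:ℂ))
    (φ : M ≃ₗ[ℂ] Pst) (hT : IsTheta A lam al be ga M φ)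
    (N : LieSubmodule ℂ L M) (hN : N ≠ ⊥) : N = ⊤ := by
  obtain ⟨hTe, hTf, hTh, hTd, hTc⟩ := hT
  set ψ : M ≃ₗ[ℂ] Ast := φ.trans EAeq with hψdef
  have hpsi : ∀ m : M, ψ m = EA (φ m) := fun _ => rfl
  set V : Submodule ℂ Ast := Submodule.map (ψ : M →ₗ[ℂ] Ast) (N : Submodule ℂ M) with hVdef
  have hmem : ∀ {x : M}, x ∈ N → ψ x ∈ V := fun {x} hx =>
    Submodule.mem_map_of_mem ((LieSubmodule.mem_toSubmodule N).mpr hx)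
  rw [Ne, LieSubmodule.eq_bot_iff] at hN
  push_neg at hN
  obtain ⟨n0, hn0N, hn00⟩ := hN
  have hg00 : ψ n0 ≠ 0 := fun h => hn00 (ψ.injective (h.trans (map_zero ψ).symm))
  have hX : ∀ v ∈ V, (X:Ast) * v ∈ V := by
    rintro v ⟨n, hn, rfl⟩
    have hn' : n ∈ N := (LieSubmodule.mem_toSubmodule N).mp hn
    simp only [LinearEquiv.coe_coe]
    have hb : ψ ⁅A.d 0, n⁆ = X * ψ n := by
      rw [hpsi, hpsi, hTd 0 n, EA_dOp]
      simp
    rw [← hb]; exact hmem (N.lie_mem hn')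
  have hCX : ∀ v ∈ V, (C X:Ast) * v ∈ V := by
    rintro v ⟨n, hn, rfl⟩
    have hn' : n ∈ N := (LieSubmodule.mem_toSubmodule N).mp hn
    simp only [LinearEquiv.coe_coe]
    have hb : ψ ⁅A.h 0, n⁆ = C X * ψ n := by
      rw [hpsi, hpsi, hTh 0 n, EA_hOp]
      simp
    rw [← hb]; exact hmem (N.lie_mem hn')
  have hE : ∀ i : ℤ, ∀ v ∈ V, C (lin be) * ShA (i:ℂ) 2 v ∈ V := by
    rintro i v ⟨n, hn, rfl⟩
    have hn' : n ∈ N := (LieSubmodule.mem_toSubmodule N).mp hn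
    simp only [LinearEquiv.coe_coe]
    have hne : lam ^ i * al ≠ 0 := mul_ne_zero (zpow_ne_zero i hlam) hal
    have hb : C (lin be) * ShA (i:ℂ) 2 (ψ n) = (lam ^ i * al)⁻¹ • ψ ⁅A.e i, n⁆ := by
      rw [hpsi, hpsi, hTe i n, EA_thetaE, smul_smul, inv_mul_cancel₀ hne, one_smul]
    rw [hb]
    exact V.smul_mem _ (hmem (N.lie_mem hn'))
  have hF : ∀ i : ℤ, ∀ v ∈ V, C (lin (-be)) * ShA (i:ℂ) (-2) v ∈ V := by
    rintro i v ⟨n, hn, rfl⟩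
    have hn' : n ∈ N := (LieSubmodule.mem_toSubmodule N).mp hn
    simp only [LinearEquiv.coe_coe]
    have hne : -(lam ^ i / al) ≠ 0 :=
      neg_ne_zero.mpr (div_ne_zero (zpow_ne_zero i hlam) hal)
    have hb : C (lin (-be)) * ShA (i:ℂ) (-2) (ψ n) = (-(lam ^ i / al))⁻¹ • ψ ⁅A.f i, n⁆ := by
      rw [hpsi, hpsi, hTf i n, EA_thetaF, smul_smul, inv_mul_cancel₀ hne, one_smul]
    rw [hb]
    exact V.smul_mem _ (hmem (N.lie_mem hn'))
  have hVtop : V = ⊤ :=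
    submodule_top_theta V be hbe (ψ n0) (hmem hn0N) hg00 hX hCX hE hF
  exact lie_top_of_map_top φ N hVtop

end Modules
end AVProof

namespace AVProof
open Polynomial

/-- `q_j = t/2 + (j - (β+1))`. -/
def qlin (be : ℂ) (j : ℕ) : Rt := lin ((j:ℂ) - (be + 1))

/-- `P = ∏_{j=0}^{k₀} (t/2 - β + j)`. -/
def Ppoly (be : ℂ) (k0 : ℕ) : Rt := ∏ j ∈ Finset.range (k0+1), qlin be (j+1)

lemma ShR2_qlin (be : ℂ) (j : ℕ) : ShR 2 (qlin be (j+1)) = qlin be j := by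
  rw [qlin, qlin, ShR_lin]; congr 1; push_cast; ring

lemma ShRm2_qlin (be : ℂ) (j : ℕ) : ShR (-2) (qlin be (j+1)) = qlin be (j+2) := by
  rw [qlin, qlin, ShR_lin]; congr 1; push_cast; ring

lemma lin_be_eq (be : ℂ) (k0 : ℕ) (hk : 2 * be = (k0:ℂ)) : lin be = qlin be (k0+1) := by
  rw [qlin]; congr 1; push_cast; linear_combination hk

lemma lin_negbe_eq (be : ℂ) : lin (-be) = qlin be 1 := by
  rw [qlin]; congr 1; push_cast; ring

lemma prod_shift (f : ℕ → Rt) (n : ℕ) :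
    f 0 * ∏ j ∈ Finset.range n, f (j+1) = f n * ∏ j ∈ Finset.range n, f j := by
  rw [mul_comm, ← Finset.prod_range_succ', Finset.prod_range_succ, mul_comm]

lemma identI1 (be : ℂ) (k0 : ℕ) (hk : 2 * be = (k0:ℂ)) :
    lin be * ShR 2 (Ppoly be k0) = qlin be 0 * Ppoly be k0 := by
  rw [Ppoly, map_prod]
  simp only [ShR2_qlin]
  rw [lin_be_eq be k0 hk]
  exact (prod_shift (fun j => qlin be j) (k0+1)).symm

lemma identI2 (be : ℂ) (k0 : ℕ) :
    lin (-be) * ShR (-2) (Ppoly be k0) = qlin be (k0+2) * Ppoly be k0 := by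
  rw [Ppoly, map_prod]
  simp only [ShRm2_qlin]
  rw [lin_negbe_eq be]
  exact prod_shift (fun j => qlin be (j+1)) (k0+1)

lemma Ppoly_ne_zero (be : ℂ) (k0 : ℕ) : Ppoly be k0 ≠ 0 :=
  Finset.prod_ne_zero_iff.mpr (fun _ _ => lin_ne_zero _)

lemma Ppoly_not_unit (be : ℂ) (k0 : ℕ) : ¬ IsUnit (Ppoly be k0) := by
  intro h
  have hd := isUnit_iff_degree_eq_zero.mp h
  have h1 : ∀ j ∈ Finset.range (k0+1), (qlin be (j+1)).degree = 1 := by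
    intro j _
    rw [qlin, lin]
    exact degree_linear (inv_ne_zero two_ne_zero)
  have hdeg : (Ppoly be k0).degree = ((k0+1 : ℕ) : WithBot ℕ) := by
    rw [Ppoly, degree_prod, Finset.sum_congr rfl h1, Finset.sum_const, Finset.card_range]
    simp
  rw [hdeg] at hd
  have h2 : (k0+1 : ℕ) = 0 := by exact_mod_cast hd
  omega

section ThetaRed

variable {L : Type} [LieRing L] [LieAlgebra ℂ L] (A : AVAlgebra L)
variable (lam al be ga : ℂ)
variable {M : Type} [AddCommGroup M] [Module ℂ M] [LieRingModule L M] [LieModule ℂ L M]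

lemma theta_reducible (hlam : lam ≠ 0) (hal : al ≠ 0) (k0 : ℕ) (hk : 2 * be = (k0:ℂ))
    (φ : M ≃ₗ[ℂ] Pst) (hT : IsTheta A lam al be ga M φ) :
    ∃ N : LieSubmodule ℂ L M, N ≠ ⊥ ∧ N ≠ ⊤ := by
  obtain ⟨hTe, hTf, hTh, hTd, hTc⟩ := hT
  set ψ : M ≃ₗ[ℂ] Ast := φ.trans EAeq with hψdef
  have hpsi : ∀ m : M, ψ m = EA (φ m) := fun _ => rfl
  set P : Rt := Ppoly be k0 with hP
  set W : Submodule ℂ Ast := LinearMap.range (LinearMap.mulLeft ℂ (C P : Ast)) with hW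
  have hWmem : ∀ {v : Ast}, v ∈ W ↔ ∃ y, (C P : Ast) * y = v := by
    intro v
    rw [hW, LinearMap.mem_range]
    constructor
    · rintro ⟨y, rfl⟩; exact ⟨y, rfl⟩
    · rintro ⟨y, rfl⟩; exact ⟨y, rfl⟩
  have hWe : ∀ (i : ℤ) (v : Ast), v ∈ W → C (lin be) * ShA (i:ℂ) 2 v ∈ W := by
    intro i v hv
    obtain ⟨y, rfl⟩ := hWmem.mp hv
    refine hWmem.mpr ⟨C (qlin be 0) * ShA (i:ℂ) 2 y, ?_⟩
    rw [map_mul, ShA_C]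
    have hCrel : (C (lin be) : Ast) * C (ShR 2 P) = C (qlin be 0) * C P := by
      rw [← map_mul, ← map_mul, hP, identI1 be k0 hk]
    linear_combination (- ShA (i:ℂ) 2 y) * hCrel
  have hWf : ∀ (i : ℤ) (v : Ast), v ∈ W → C (lin (-be)) * ShA (i:ℂ) (-2) v ∈ W := by
    intro i v hv
    obtain ⟨y, rfl⟩ := hWmem.mp hv
    refine hWmem.mpr ⟨C (qlin be (k0+2)) * ShA (i:ℂ) (-2) y, ?_⟩
    rw [map_mul, ShA_C]
    have hCrel : (C (lin (-be)) : Ast) * C (ShR (-2) P) = C (qlin be (k0+2)) * C P := by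
      rw [← map_mul, ← map_mul, hP, identI2 be k0]
    linear_combination (- ShA (i:ℂ) (-2) y) * hCrel
  have hWgen : ∀ (a : Ast) (i : ℤ) (v : Ast), v ∈ W → a * ShA (i:ℂ) 0 v ∈ W := by
    intro a i v hv
    obtain ⟨y, rfl⟩ := hWmem.mp hv
    refine hWmem.mpr ⟨a * ShA (i:ℂ) 0 y, ?_⟩
    rw [map_mul, ShA_C, ShR_zero]
    ring
  have hbr : ∀ (x : L) (m : M), ψ m ∈ W → ψ ⁅x, m⁆ ∈ W := by
    let G : Submodule ℂ L :=
      { carrier := {x : L | ∀ m : M, ψ m ∈ W → ψ ⁅x, m⁆ ∈ W}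
        add_mem' := fun {x y} hx hy m hm => by
          rw [add_lie, map_add]; exact W.add_mem (hx m hm) (hy m hm)
        zero_mem' := fun m hm => by rw [zero_lie, map_zero]; exact W.zero_mem
        smul_mem' := fun c x hx m hm => by
          rw [smul_lie, map_smul]; exact W.smul_mem c (hx m hm) }
    have hrange : Set.range (Sum.elim
        (fun q : Fin 4 × ℤ => ![A.e, A.f, A.h, A.d] q.1 q.2)
        (fun _ : Unit => A.cC)) ⊆ (G : Set L) := by
      rintro x ⟨q, rfl⟩
      rcases q with ⟨fi, i⟩ | u
      · fin_cases fi
        · show ∀ m : M, ψ m ∈ W → ψ ⁅A.e i, m⁆ ∈ W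
          intro m hm
          have hb : ψ ⁅A.e i, m⁆
              = (lam ^ i * al) • (C (lin be) * ShA (i:ℂ) 2 (ψ m)) := by
            rw [hpsi, hTe i m, EA_thetaE, ← hpsi]
          rw [hb]
          exact W.smul_mem _ (hWe i _ hm)
        · show ∀ m : M, ψ m ∈ W → ψ ⁅A.f i, m⁆ ∈ W
          intro m hm
          have hb : ψ ⁅A.f i, m⁆
              = (-(lam ^ i / al)) • (C (lin (-be)) * ShA (i:ℂ) (-2) (ψ m)) := by
            rw [hpsi, hTf i m, EA_thetaF, ← hpsi]
          rw [hb]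
          exact W.smul_mem _ (hWf i _ hm)
        · show ∀ m : M, ψ m ∈ W → ψ ⁅A.h i, m⁆ ∈ W
          intro m hm
          have hb : ψ ⁅A.h i, m⁆ = lam ^ i • ((C X : Ast) * ShA (i:ℂ) 0 (ψ m)) := by
            rw [hpsi, hTh i m, EA_hOp, ← hpsi]
          rw [hb]
          exact W.smul_mem _ (hWgen (C X) i _ hm)
        · show ∀ m : M, ψ m ∈ W → ψ ⁅A.d i, m⁆ ∈ W
          intro m hm
          have hb : ψ ⁅A.d i, m⁆
              = lam ^ i • ((X + C (C ((i:ℂ) * ga))) * ShA (i:ℂ) 0 (ψ m)) := by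
            rw [hpsi, hTd i m, EA_dOp, ← hpsi]
          rw [hb]
          exact W.smul_mem _ (hWgen (X + C (C ((i:ℂ) * ga))) i _ hm)
      · show ∀ m : M, ψ m ∈ W → ψ ⁅A.cC, m⁆ ∈ W
        intro m _
        rw [hTc m, map_zero]
        exact W.zero_mem
    have hGtop : ∀ x : L, x ∈ G := by
      intro x
      have hle := Submodule.span_le.mpr hrange
      rw [A.spans] at hle
      exact hle trivial
    intro x m hm
    exact hGtop x m hm
  set NS : Submodule ℂ M := Submodule.comap (ψ : M →ₗ[ℂ] Ast) W with hNS
  have hNSmem : ∀ {m : M}, m ∈ NS ↔ ψ m ∈ W := by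
    intro m
    rw [hNS, Submodule.mem_comap]
    exact Iff.rfl
  refine ⟨{ toSubmodule := NS
            lie_mem := fun {x m} hm => hNSmem.mpr (hbr x m (hNSmem.mp hm)) }, ?_, ?_⟩
  · intro hbot
    rw [LieSubmodule.eq_bot_iff] at hbot
    have hCP0 : (C P : Ast) ≠ 0 := fun h => Ppoly_ne_zero be k0 (by simpa [hP] using h)
    have hm1 : ψ.symm (C P : Ast) ∈ NS :=
      hNSmem.mpr (by rw [ψ.apply_symm_apply]; exact hWmem.mpr ⟨1, mul_one _⟩)
    have := hbot (ψ.symm (C P : Ast)) hm1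
    apply hCP0
    rw [← ψ.apply_symm_apply (C P : Ast), this, map_zero]
  · intro htop
    have hm1 : ψ.symm (1 : Ast) ∈ NS := by
      have : ψ.symm (1 : Ast) ∈
          ({ toSubmodule := NS
             lie_mem := fun {x m} hm => hNSmem.mpr (hbr x m (hNSmem.mp hm)) } :
            LieSubmodule ℂ L M) := by
        rw [htop]; exact LieSubmodule.mem_top _
      exact this
    have h1W : (1 : Ast) ∈ W := by
      have := hNSmem.mp hm1
      rwa [ψ.apply_symm_apply] at this
    obtain ⟨y, hy⟩ := hWmem.mp h1W
    have hu : IsUnit (C P : Ast) := IsUnit.of_mul_eq_one y hy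
    exact Ppoly_not_unit be k0 (Polynomial.isUnit_C.mp (by rwa [hP] at hu))

end ThetaRed

section BotTop

variable {L : Type} [LieRing L] [LieAlgebra ℂ L]
variable {M : Type} [AddCommGroup M] [Module ℂ M] [LieRingModule L M] [LieModule ℂ L M]

lemma bot_ne_top_lie (φ : M ≃ₗ[ℂ] Pst) : (⊥ : LieSubmodule ℂ L M) ≠ ⊤ := by
  intro h
  have h1 : φ.symm 1 ∈ (⊥ : LieSubmodule ℂ L M) := by
    rw [h]; exact LieSubmodule.mem_top _
  rw [LieSubmodule.mem_bot] at h1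
  have h2 := congrArg φ h1
  rw [φ.apply_symm_apply, map_zero] at h2
  exact one_ne_zero h2

end BotTop

end AVProof

/-- `Ω(λ,α,β,γ)` and `Δ(λ,α,β,γ)` are irreducible; `Θ(λ,α,β,γ)` is irreducible
iff `2β` is not a nonnegative integer. -/
theorem stmt_0 {L : Type} [LieRing L] [LieAlgebra ℂ L] (A : AVAlgebra L)
    (lam al be ga : ℂ) (hlam : lam ≠ 0) (hal : al ≠ 0)
    (MO : Type) [AddCommGroup MO] [Module ℂ MO] [LieRingModule L MO] [LieModule ℂ L MO] (φO : MO ≃ₗ[ℂ] Pst) (hO : IsOmega A lam al be ga MO φO)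
    (MD : Type) [AddCommGroup MD] [Module ℂ MD] [LieRingModule L MD] [LieModule ℂ L MD] (φD : MD ≃ₗ[ℂ] Pst) (hD : IsDelta A lam al be ga MD φD)
    (MT : Type) [AddCommGroup MT] [Module ℂ MT] [LieRingModule L MT] [LieModule ℂ L MT] (φT : MT ≃ₗ[ℂ] Pst) (hT : IsTheta A lam al be ga MT φT) :
    LieModule.IsIrreducible ℂ L MO ∧ LieModule.IsIrreducible ℂ L MD ∧
      (LieModule.IsIrreducible ℂ L MT ↔ ¬∃ k : ℕ, 2 * be = (k : ℂ)) := by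
  classical
  refine ⟨?_, ?_, ?_⟩
  · haveI : Nontrivial (LieSubmodule ℂ L MO) := ⟨⊥, ⊤, AVProof.bot_ne_top_lie φO⟩
    exact ⟨fun N => by
      by_cases h : N = ⊥
      · exact Or.inl h
      · exact Or.inr (AVProof.omega_N_top A lam al be ga hlam hal φO hO N h)⟩
  · haveI : Nontrivial (LieSubmodule ℂ L MD) := ⟨⊥, ⊤, AVProof.bot_ne_top_lie φD⟩
    exact ⟨fun N => by
      by_cases h : N = ⊥
      · exact Or.inl h
      · exact Or.inr (AVProof.delta_N_top A lam al be ga hlam hal φD hD N h)⟩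
  · constructor
    · intro hirr
      rintro ⟨k0, hk⟩
      obtain ⟨N, hN1, hN2⟩ :=
        AVProof.theta_reducible A lam al be ga hlam hal k0 hk φT hT
      rcases hirr.eq_bot_or_eq_top N with h | h
      · exact hN1 h
      · exact hN2 h
    · intro hbe
      haveI : Nontrivial (LieSubmodule ℂ L MT) := ⟨⊥, ⊤, AVProof.bot_ne_top_lie φT⟩
      exact ⟨fun N => by
        by_cases h : N = ⊥
        · exact Or.inl h
        · exact Or.inr (AVProof.theta_N_top A lam al be ga hlam hal hbe φT hT N h)⟩

end
end

section
/- Let λ ∈ ℂ∖{0} and γ ∈ ℂ, and for each i ∈ ℤ let D_i be the linear operator on the polynomial ring ℂ[s,t] defined by (D_i g)(s,t) = λ^i (s + iγ) g(s−i, t). Then for every integer r > 2 and all l, m ∈ ℤ, the operator ∑_{i=0}^{r} C(r,i) (−1)^{r−i} D_{l−m−i} ∘ D_{m+i} is zero on ℂ[s,t], where C(r,i) denotes the binomial coefficient. -/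
open scoped TensorProduct

noncomputable section

private lemma alt0 (r : ℕ) (hr : 1 ≤ r) :
    ∑ i ∈ Finset.range (r + 1), ((r.choose i : ℂ) * (-1) ^ (r - i)) = 0 := by
  have h := add_pow (1 : ℂ) (-1) r
  simp only [one_pow, one_mul, add_neg_cancel] at h
  rw [zero_pow (by omega)] at h
  rw [show (∑ i ∈ Finset.range (r + 1), ((r.choose i : ℂ) * (-1) ^ (r - i)))
      = ∑ i ∈ Finset.range (r + 1), ((-1 : ℂ) ^ (r - i) * (r.choose i)) from
    Finset.sum_congr rfl fun i _ => mul_comm _ _]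
  exact h.symm

private lemma alt1 (r : ℕ) (hr : 2 ≤ r) :
    ∑ i ∈ Finset.range (r + 1), ((r.choose i : ℂ) * (-1) ^ (r - i) * (i : ℂ)) = 0 := by
  obtain ⟨n, rfl⟩ : ∃ n, r = n + 1 := ⟨r - 1, by omega⟩
  rw [Finset.sum_range_succ']
  simp only [Nat.cast_zero, mul_zero, add_zero]
  have key : ∀ j : ℕ, (((n + 1).choose (j + 1) : ℂ)) * ((j : ℂ) + 1)
      = ((n : ℂ) + 1) * (n.choose j) := by
    intro j
    have : ((n + 1) * n.choose j : ℕ) = ((n + 1).choose (j + 1) * (j + 1) : ℕ) :=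
      Nat.add_one_mul_choose_eq n j
    exact_mod_cast (congrArg (Nat.cast (R := ℂ)) this).symm
  have step : ∀ j ∈ Finset.range (n + 1),
      (((n + 1).choose (j + 1) : ℂ) * (-1) ^ (n + 1 - (j + 1)) * ((j + 1 : ℕ) : ℂ))
        = ((n : ℂ) + 1) * ((n.choose j : ℂ) * (-1) ^ (n - j)) := by
    intro j _
    push_cast
    rw [show (((n + 1).choose (j + 1) : ℂ) * (-1) ^ (n - j) * ((j : ℂ) + 1))
        = (((n + 1).choose (j + 1) : ℂ) * ((j : ℂ) + 1)) * (-1) ^ (n - j) by ring, key j]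
    ring
  rw [Finset.sum_congr rfl step, ← Finset.mul_sum, alt0 n (by omega), mul_zero]

private lemma alt2 (r : ℕ) (hr : 3 ≤ r) :
    ∑ i ∈ Finset.range (r + 1), ((r.choose i : ℂ) * (-1) ^ (r - i) * (i : ℂ) ^ 2) = 0 := by
  obtain ⟨n, rfl⟩ : ∃ n, r = n + 1 := ⟨r - 1, by omega⟩
  rw [Finset.sum_range_succ']
  simp only [Nat.cast_zero, add_zero, ne_eq, OfNat.ofNat_ne_zero, not_false_eq_true,
    zero_pow, mul_zero]
  have key : ∀ j : ℕ, (((n + 1).choose (j + 1) : ℂ)) * ((j : ℂ) + 1)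
      = ((n : ℂ) + 1) * (n.choose j) := by
    intro j
    have : ((n + 1) * n.choose j : ℕ) = ((n + 1).choose (j + 1) * (j + 1) : ℕ) :=
      Nat.add_one_mul_choose_eq n j
    exact_mod_cast (congrArg (Nat.cast (R := ℂ)) this).symm
  have step : ∀ j ∈ Finset.range (n + 1),
      (((n + 1).choose (j + 1) : ℂ) * (-1) ^ (n + 1 - (j + 1)) * ((j + 1 : ℕ) : ℂ) ^ 2)
        = ((n : ℂ) + 1) * ((n.choose j : ℂ) * (-1) ^ (n - j) * (j : ℂ)
            + (n.choose j : ℂ) * (-1) ^ (n - j)) := by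
    intro j _
    push_cast
    rw [show (((n + 1).choose (j + 1) : ℂ) * (-1) ^ (n - j) * ((j : ℂ) + 1) ^ 2)
        = ((((n + 1).choose (j + 1) : ℂ)) * ((j : ℂ) + 1)) * ((-1) ^ (n - j) * ((j : ℂ) + 1))
        by ring, key j]
    ring
  rw [Finset.sum_congr rfl step, ← Finset.mul_sum, Finset.sum_add_distrib,
    alt1 n (by omega), alt0 n (by omega), add_zero, mul_zero]

open MvPolynomial in
private lemma shift_comp' (a b : ℂ) : shiftST a 0 ∘ₗ shiftST b 0 = shiftST (a + b) 0 := by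
  unfold shiftST
  rw [← AlgHom.comp_toLinearMap]
  congr 1
  apply MvPolynomial.algHom_ext
  intro i
  fin_cases i <;>
    simp [sVar, tVar, map_sub, Matrix.cons_val_zero, Matrix.cons_val_one] <;> ring

open MvPolynomial in
private lemma shift_s' (a : ℂ) : shiftST a 0 sVar = sVar - MvPolynomial.C a := by
  simp [shiftST, sVar]

open MvPolynomial in
private lemma shift_C' (a c : ℂ) : shiftST a 0 (MvPolynomial.C c) = MvPolynomial.C c := by
  simp [shiftST]

private lemma shift_mulLeft' (a : ℂ) (p : Pst) :
    shiftST a 0 ∘ₗ LinearMap.mulLeft ℂ p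
      = LinearMap.mulLeft ℂ (shiftST a 0 p) ∘ₗ shiftST a 0 := by
  apply LinearMap.ext; intro g
  simp [shiftST, map_mul]

private lemma dOp_comp' (lam ga : ℂ) (a b : ℤ) :
    dOp lam ga a ∘ₗ dOp lam ga b
      = (lam ^ a * lam ^ b) •
        (LinearMap.mulLeft ℂ
            ((sVar + MvPolynomial.C ((a : ℂ) * ga)) *
             (sVar - MvPolynomial.C (a : ℂ) + MvPolynomial.C ((b : ℂ) * ga))) ∘ₗ
          shiftST ((a : ℂ) + (b : ℂ)) 0) := by
  unfold dOp
  rw [LinearMap.smul_comp, LinearMap.comp_smul, smul_smul]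
  congr 1
  rw [LinearMap.comp_assoc, ← LinearMap.comp_assoc (shiftST (b:ℂ) 0)
      (LinearMap.mulLeft ℂ (sVar + MvPolynomial.C ((b:ℂ) * ga))) (shiftST (a:ℂ) 0),
    shift_mulLeft', LinearMap.comp_assoc, shift_comp', ← LinearMap.comp_assoc,
    ← LinearMap.mulLeft_mul]
  congr 3
  rw [map_add, shift_s', shift_C']

private lemma mulLeft_smul' (a : ℂ) (p : Pst) :
    LinearMap.mulLeft ℂ (a • p) = a • LinearMap.mulLeft ℂ p := by
  apply LinearMap.ext; intro g
  simp [smul_mul_assoc]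

private lemma sum_comp'' {ι : Type*} (s : Finset ι) (f : ι → Module.End ℂ Pst)
    (g : Module.End ℂ Pst) : (∑ i ∈ s, f i) ∘ₗ g = ∑ i ∈ s, (f i ∘ₗ g) := by
  apply LinearMap.ext; intro x
  simp [LinearMap.sum_apply]

private lemma mulLeft_sum' {ι : Type*} (s : Finset ι) (p : ι → Pst) :
    LinearMap.mulLeft ℂ (∑ i ∈ s, p i) = ∑ i ∈ s, LinearMap.mulLeft ℂ (p i) := by
  apply LinearMap.ext; intro g
  simp [Finset.sum_mul]

open MvPolynomial in
private lemma key_poly' (ga : ℂ) (r : ℕ) (hr : 2 < r) (l m : ℤ) :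
    ∑ i ∈ Finset.range (r + 1), ((r.choose i : ℂ) * (-1) ^ (r - i)) •
      ((sVar + C (((l - m - (i : ℤ) : ℤ) : ℂ) * ga)) *
       (sVar - C ((l - m - (i : ℤ) : ℤ) : ℂ) + C (((m + (i : ℤ) : ℤ) : ℂ) * ga))) = 0 := by
  set L : ℂ := (l : ℂ)
  set M : ℂ := (m : ℂ)
  set A : Pst := (sVar + C ((L - M) * ga)) * (sVar - C (L - M) + C (M * ga)) with hA
  set B : Pst := (sVar + C ((L - M) * ga)) * (1 + C ga)
      - C ga * (sVar - C (L - M) + C (M * ga)) with hB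
  set D : Pst := -(C ga * (1 + C ga)) with hD
  have claim : ∀ i : ℕ,
      ((sVar + C (((l - m - (i : ℤ) : ℤ) : ℂ) * ga)) *
       (sVar - C ((l - m - (i : ℤ) : ℤ) : ℂ) + C (((m + (i : ℤ) : ℤ) : ℂ) * ga)))
        = A + (i : ℂ) • B + ((i : ℂ) ^ 2) • D := by
    intro i
    push_cast
    rw [hA, hB, hD]
    simp only [MvPolynomial.smul_eq_C_mul, map_sub, map_add, map_mul, map_one, map_pow,
      map_neg]
    ring
  calc ∑ i ∈ Finset.range (r + 1), ((r.choose i : ℂ) * (-1) ^ (r - i)) •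
      ((sVar + C (((l - m - (i : ℤ) : ℤ) : ℂ) * ga)) *
       (sVar - C ((l - m - (i : ℤ) : ℤ) : ℂ) + C (((m + (i : ℤ) : ℤ) : ℂ) * ga)))
      = ∑ i ∈ Finset.range (r + 1),
          (((r.choose i : ℂ) * (-1) ^ (r - i)) • A
            + ((r.choose i : ℂ) * (-1) ^ (r - i) * (i : ℂ)) • B
            + ((r.choose i : ℂ) * (-1) ^ (r - i) * (i : ℂ) ^ 2) • D) := by
        refine Finset.sum_congr rfl fun i _ => ?_
        rw [claim i, smul_add, smul_add, smul_smul, smul_smul]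
    _ = (∑ i ∈ Finset.range (r + 1), ((r.choose i : ℂ) * (-1) ^ (r - i))) • A
          + (∑ i ∈ Finset.range (r + 1), ((r.choose i : ℂ) * (-1) ^ (r - i) * (i : ℂ))) • B
          + (∑ i ∈ Finset.range (r + 1),
              ((r.choose i : ℂ) * (-1) ^ (r - i) * (i : ℂ) ^ 2)) • D := by
        rw [Finset.sum_add_distrib, Finset.sum_add_distrib, Finset.sum_smul, Finset.sum_smul,
          Finset.sum_smul]
    _ = 0 := by
        rw [alt0 r (by omega), alt1 r (by omega), alt2 r (by omega), zero_smul, zero_smul,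
          zero_smul, add_zero, add_zero]

/-- for `r > 2` the operator `∑_{i=0}^r C(r,i)(−1)^{r−i} D_{l−m−i} ∘ D_{m+i}`
vanishes on ℂ[s,t]. -/
theorem stmt_9 (lam ga : ℂ) (hlam : lam ≠ 0) (r : ℕ) (hr : 2 < r) (l m : ℤ) :
    ∑ i ∈ Finset.range (r + 1), ((r.choose i : ℂ) * (-1) ^ (r - i)) •
      (dOp lam ga (l - m - (i : ℤ)) ∘ₗ dOp lam ga (m + (i : ℤ))) = 0 := by
  have hterm : ∀ i ∈ Finset.range (r + 1),
      ((r.choose i : ℂ) * (-1) ^ (r - i)) •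
        (dOp lam ga (l - m - (i : ℤ)) ∘ₗ dOp lam ga (m + (i : ℤ)))
      = (lam ^ l) • (((r.choose i : ℂ) * (-1) ^ (r - i)) •
          (LinearMap.mulLeft ℂ
            ((sVar + MvPolynomial.C (((l - m - (i : ℤ) : ℤ) : ℂ) * ga)) *
             (sVar - MvPolynomial.C ((l - m - (i : ℤ) : ℤ) : ℂ)
                + MvPolynomial.C (((m + (i : ℤ) : ℤ) : ℂ) * ga))) ∘ₗ
            shiftST (l : ℂ) 0)) := by
    intro i _
    rw [dOp_comp']
    have h1 : lam ^ (l - m - (i : ℤ)) * lam ^ (m + (i : ℤ)) = lam ^ l := by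
      rw [← zpow_add₀ hlam]
      congr 1
      ring
    have h2 : (((l - m - (i : ℤ) : ℤ) : ℂ) + ((m + (i : ℤ) : ℤ) : ℂ)) = (l : ℂ) := by
      push_cast; ring
    rw [h1, h2, smul_comm]
  rw [Finset.sum_congr rfl hterm, ← Finset.smul_sum]
  have : ∑ i ∈ Finset.range (r + 1),
      ((r.choose i : ℂ) * (-1) ^ (r - i)) •
        (LinearMap.mulLeft ℂ
            ((sVar + MvPolynomial.C (((l - m - (i : ℤ) : ℤ) : ℂ) * ga)) *
             (sVar - MvPolynomial.C ((l - m - (i : ℤ) : ℤ) : ℂ)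
                + MvPolynomial.C (((m + (i : ℤ) : ℤ) : ℂ) * ga))) ∘ₗ
          shiftST (l : ℂ) 0) = 0 := by
    have := key_poly' ga r hr l m
    calc ∑ i ∈ Finset.range (r + 1),
        ((r.choose i : ℂ) * (-1) ^ (r - i)) •
          (LinearMap.mulLeft ℂ
              ((sVar + MvPolynomial.C (((l - m - (i : ℤ) : ℤ) : ℂ) * ga)) *
               (sVar - MvPolynomial.C ((l - m - (i : ℤ) : ℤ) : ℂ)
                  + MvPolynomial.C (((m + (i : ℤ) : ℤ) : ℂ) * ga))) ∘ₗ
            shiftST (l : ℂ) 0)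
        = (LinearMap.mulLeft ℂ (∑ i ∈ Finset.range (r + 1),
            ((r.choose i : ℂ) * (-1) ^ (r - i)) •
              ((sVar + MvPolynomial.C (((l - m - (i : ℤ) : ℤ) : ℂ) * ga)) *
               (sVar - MvPolynomial.C ((l - m - (i : ℤ) : ℤ) : ℂ)
                  + MvPolynomial.C (((m + (i : ℤ) : ℤ) : ℂ) * ga))))) ∘ₗ
          shiftST (l : ℂ) 0 := by
          rw [mulLeft_sum', sum_comp'']
          exact Finset.sum_congr rfl fun i _ => by rw [mulLeft_smul', LinearMap.smul_comp]
      _ = 0 := by rw [this, LinearMap.mulLeft_zero_eq_zero, LinearMap.zero_comp]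
  rw [this, smul_zero]


end
end

section
/- Let λ, α ∈ ℂ∖{0}, β, γ, η, ε, θ ∈ ℂ with (η,ε,θ) ≠ (0,0,0), let M(λ,α,β,γ) be any one of the 𝔏-modules Ω(λ,α,β,γ), Δ(λ,α,β,γ), Θ(λ,α,β,γ), and let V(η,ε,θ) be an irreducible highest weight 𝔏-module with highest weight (η,ε,θ). Then for all λ', α' ∈ ℂ∖{0} and β', γ' ∈ ℂ, the tensor product 𝔏-module M(λ,α,β,γ) ⊗ V(η,ε,θ) is not isomorphic to any of Ω(λ',α',β',γ'), Δ(λ',α',β',γ'), Θ(λ',α',β',γ'). -/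
open scoped TensorProduct

noncomputable section

/-- `v` is a highest weight vector of weight `(η, ε, θ)`. -/
def IsHWVector {L : Type} [LieRing L] [LieAlgebra ℂ L] (A : AVAlgebra L)
    (V : Type) [AddCommGroup V] [Module ℂ V] [LieRingModule L V]
    (eta eps th : ℂ) (v : V) : Prop :=
  ⁅A.e 0, v⁆ = 0 ∧
  (∀ i : ℤ, 1 ≤ i → ⁅A.e i, v⁆ = 0 ∧ ⁅A.f i, v⁆ = 0 ∧ ⁅A.h i, v⁆ = 0 ∧ ⁅A.d i, v⁆ = 0) ∧
  ⁅A.d 0, v⁆ = eta • v ∧ ⁅A.h 0, v⁆ = eps • v ∧ ⁅A.cC, v⁆ = th • v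

/-- `V` is an irreducible highest weight 𝔏-module with highest weight `(η, ε, θ)`: it is
irreducible and generated by a nonzero highest weight vector of weight `(η, ε, θ)`. -/
def IsIrrHW {L : Type} [LieRing L] [LieAlgebra ℂ L] (A : AVAlgebra L)
    (V : Type) [AddCommGroup V] [Module ℂ V] [LieRingModule L V] [LieModule ℂ L V]
    (eta eps th : ℂ) : Prop :=
  LieModule.IsIrreducible ℂ L V ∧
  ∃ v : V, v ≠ 0 ∧ LieSubmodule.lieSpan ℂ L ({v} : Set V) = ⊤ ∧ IsHWVector A V eta eps th v


section Aux

open MvPolynomial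

lemma shiftST_apply (a b : ℂ) (g : Pst) :
    shiftST a b g = MvPolynomial.aeval ![sVar - MvPolynomial.C a, tVar - MvPolynomial.C b] g :=
  rfl

set_option maxRecDepth 4000 in
lemma shiftST_comp (a c : ℂ) (g : Pst) :
    shiftST a 0 (shiftST c 0 g) = shiftST (a + c) 0 g := by
  show (aeval ![sVar - C a, tVar - C 0]) ((aeval ![sVar - C c, tVar - C 0]) g)
     = (aeval ![sVar - C (a + c), tVar - C 0]) g
  rw [← AlgHom.comp_apply, MvPolynomial.comp_aeval]
  congr 1
  apply MvPolynomial.algHom_ext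
  intro i
  rw [aeval_X, aeval_X]
  match i with
  | 0 =>
    rw [show (![sVar - C c, tVar - C 0] : Fin 2 → Pst) 0 = sVar - C c from rfl,
      show (![sVar - C (a + c), tVar - C 0] : Fin 2 → Pst) 0 = sVar - C (a + c) from rfl,
      map_sub, aeval_C, MvPolynomial.algebraMap_eq,
      show (aeval ![sVar - C a, tVar - C 0]) sVar = sVar - C a from aeval_X _ 0,
      sub_sub, ← C_add]
  | 1 =>
    rw [show (![sVar - C c, tVar - C 0] : Fin 2 → Pst) 1 = tVar - C 0 from rfl,
      show (![sVar - C (a + c), tVar - C 0] : Fin 2 → Pst) 1 = tVar - C 0 from rfl,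
      map_sub, aeval_C, MvPolynomial.algebraMap_eq,
      show (aeval ![sVar - C a, tVar - C 0]) tVar = tVar - C 0 from aeval_X _ 1]
    rw [map_zero, sub_zero]

lemma shiftST_tVar_mul (a : ℂ) (g : Pst) :
    shiftST a 0 (tVar * g) = tVar * shiftST a 0 g := by
  simp only [shiftST_apply, map_mul]
  congr 1
  simp [tVar]

lemma shiftST_one (a b : ℂ) : shiftST a b (1 : Pst) = 1 := by
  simp [shiftST_apply]

lemma dOp_apply (lam ga : ℂ) (i : ℤ) (g : Pst) :
    dOp lam ga i g = lam ^ i • ((sVar + MvPolynomial.C ((i : ℂ) * ga)) * shiftST (i : ℂ) 0 g) :=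
  rfl

lemma hOp_apply (lam : ℂ) (i : ℤ) (g : Pst) :
    hOp lam i g = lam ^ i • (tVar * shiftST (i : ℂ) 0 g) :=
  rfl

lemma dOp_hOp (lam ga : ℂ) (i j : ℤ) (g : Pst) :
    dOp lam ga i (hOp lam j g) = (lam ^ i * lam ^ j) •
      ((sVar + MvPolynomial.C ((i : ℂ) * ga)) * (tVar * shiftST ((i : ℂ) + (j : ℂ)) 0 g)) := by
  rw [dOp_apply, hOp_apply, map_smul, shiftST_tVar_mul, shiftST_comp]
  rw [mul_smul_comm, smul_smul]

lemma keyZ (lam ga : ℂ) (g : Pst) :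
    dOp lam ga 2 (hOp lam 0 g) - (2 : ℂ) • dOp lam ga 1 (hOp lam 1 g)
      + dOp lam ga 0 (hOp lam 2 g) = 0 := by
  rw [dOp_hOp, dOp_hOp, dOp_hOp]
  simp only [zpow_ofNat, zpow_zero, zpow_one]
  norm_num
  simp only [MvPolynomial.smul_eq_C_mul, map_mul, map_ofNat, map_pow]
  ring

lemma dOp_one (lam ga : ℂ) (i : ℤ) :
    dOp lam ga i (1 : Pst) = lam ^ i • (sVar + MvPolynomial.C ((i : ℂ) * ga)) := by
  rw [dOp_apply, shiftST_one, mul_one]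

lemma hOp_one (lam : ℂ) (i : ℤ) :
    hOp lam i (1 : Pst) = lam ^ i • tVar := by
  rw [hOp_apply, shiftST_one, mul_one]

lemma tmul_ne_zero {M V : Type} [AddCommGroup M] [Module ℂ M] [AddCommGroup V] [Module ℂ V]
    {m : M} {v : V} (hm : m ≠ 0) (hv : v ≠ 0) : m ⊗ₜ[ℂ] v ≠ 0 := by
  obtain ⟨f, hf⟩ := (LinearMap.toSpanSingleton ℂ V v).exists_leftInverse_of_injective
    (LinearMap.ker_toSpanSingleton (R := ℂ) (M := V) hv)
  have hfv : f v = 1 := by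
    have := LinearMap.congr_fun hf 1
    simpa [LinearMap.toSpanSingleton_apply] using this
  intro h
  have h2 := congrArg ((TensorProduct.rid ℂ M).toLinearMap ∘ₗ LinearMap.lTensor M f) h
  simp [LinearMap.lTensor_tmul, hfv] at h2
  exact hm h2

end Aux

/-- `M(λ,α,β,γ) ⊗ V(η,ε,θ)` is not isomorphic to any of the modules
`Ω(λ',α',β',γ')`, `Δ(λ',α',β',γ')`, `Θ(λ',α',β',γ')`. -/
theorem stmt_11 {L : Type} [LieRing L] [LieAlgebra ℂ L] (A : AVAlgebra L)
    (lam al be ga eta eps th : ℂ) (hlam : lam ≠ 0) (hal : al ≠ 0)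
    (hwt : (eta, eps, th) ≠ (0, 0, 0))
    (M : Type) [AddCommGroup M] [Module ℂ M] [LieRingModule L M] [LieModule ℂ L M] (φ : M ≃ₗ[ℂ] Pst)
    (hM : IsOmega A lam al be ga M φ ∨ IsDelta A lam al be ga M φ ∨
      IsTheta A lam al be ga M φ)
    (V : Type) [AddCommGroup V] [Module ℂ V] [LieRingModule L V] [LieModule ℂ L V] (hV : IsIrrHW A V eta eps th) :
    ∀ (M' : Type) (_ : AddCommGroup M') (_ : Module ℂ M') (_ : LieRingModule L M')
      (_ : LieModule ℂ L M') (φ' : M' ≃ₗ[ℂ] Pst) (lam' al' be' ga' : ℂ),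
      lam' ≠ 0 → al' ≠ 0 →
      (IsOmega A lam' al' be' ga' M' φ' ∨ IsDelta A lam' al' be' ga' M' φ' ∨
        IsTheta A lam' al' be' ga' M' φ') →
      IsEmpty ((M ⊗[ℂ] V) ≃ₗ⁅ℂ,L⁆ M') := by
  obtain ⟨hh, hd, hC⟩ : (∀ i m, φ ⁅A.h i, m⁆ = hOp lam i (φ m)) ∧
      (∀ i m, φ ⁅A.d i, m⁆ = dOp lam ga i (φ m)) ∧ (∀ m : M, ⁅A.cC, m⁆ = 0) := by
    rcases hM with ⟨_, _, h1, h2, h3⟩ | ⟨_, _, h1, h2, h3⟩ | ⟨_, _, h1, h2, h3⟩ <;>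
      exact ⟨h1, h2, h3⟩
  obtain ⟨-, v, hv0, -, hve0, hvge, hvd0, hvh0, hvC⟩ := hV
  intro M' _ _ _ _ φ' lam' al' be' ga' hlam' hal' hM'
  obtain ⟨hh', hd', hC'⟩ : (∀ i m, φ' ⁅A.h i, m⁆ = hOp lam' i (φ' m)) ∧
      (∀ i m, φ' ⁅A.d i, m⁆ = dOp lam' ga' i (φ' m)) ∧ (∀ m : M', ⁅A.cC, m⁆ = 0) := by
    rcases hM' with ⟨_, _, h1, h2, h3⟩ | ⟨_, _, h1, h2, h3⟩ | ⟨_, _, h1, h2, h3⟩ <;>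
      exact ⟨h1, h2, h3⟩
  constructor
  intro ψ
  have hψlie : ∀ (y : L) (z : M ⊗[ℂ] V), ψ ⁅y, z⁆ = ⁅y, ψ z⁆ := fun y z =>
    LieModuleHom.map_lie (ψ : M ⊗[ℂ] V →ₗ⁅ℂ,L⁆ M') y z
  have hψsmul : ∀ (c : ℂ) (z : M ⊗[ℂ] V), ψ (c • z) = c • ψ z := fun c z =>
    map_smul ψ.toLinearEquiv c z
  have hψadd : ∀ z w : M ⊗[ℂ] V, ψ (z + w) = ψ z + ψ w := fun z w =>
    map_add ψ.toLinearEquiv z w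
  have hψsub : ∀ z w : M ⊗[ℂ] V, ψ (z - w) = ψ z - ψ w := fun z w =>
    map_sub ψ.toLinearEquiv z w
  have hψzero : ψ (0 : M ⊗[ℂ] V) = 0 := map_zero ψ.toLinearEquiv
  set m : M := φ.symm 1 with hm_def
  have hm0 : m ≠ 0 := by
    simp only [hm_def, ne_eq, EmbeddingLike.map_eq_zero_iff]
    exact one_ne_zero
  have hφm : φ m = 1 := φ.apply_symm_apply 1
  set x : M ⊗[ℂ] V := m ⊗ₜ[ℂ] v with hx_def
  have hx0 : x ≠ 0 := tmul_ne_zero hm0 hv0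
  by_cases h0 : eta = 0 ∧ eps = 0
  · -- then th ≠ 0; use the central element
    have hth : th ≠ 0 := by
      intro hth
      exact hwt (by rw [h0.1, h0.2, hth])
    have hcx : ⁅A.cC, x⁆ = th • x := by
      rw [hx_def, TensorProduct.LieModule.lie_tmul_right, hC, hvC, TensorProduct.tmul_smul,
        TensorProduct.zero_tmul, zero_add]
    have h1 : ψ ⁅A.cC, x⁆ = 0 := by
      rw [hψlie]
      exact hC' (ψ x)
    rw [hcx, hψsmul] at h1
    rcases smul_eq_zero.mp h1 with h | h
    · exact hth h
    · exact hx0 (ψ.injective (h.trans hψzero.symm))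
  · -- (eta, eps) ≠ (0,0); use the operator identity keyZ
    have hh1v : ⁅A.h 1, v⁆ = 0 := (hvge 1 le_rfl).2.2.1
    have hh2v : ⁅A.h 2, v⁆ = 0 := (hvge 2 (by norm_num)).2.2.1
    have hd1v : ⁅A.d 1, v⁆ = 0 := (hvge 1 le_rfl).2.2.2
    have hd2v : ⁅A.d 2, v⁆ = 0 := (hvge 2 (by norm_num)).2.2.2
    -- the element u of M
    set P : Pst := eps • dOp lam ga 2 1 + eta • hOp lam 2 1 with hP_def
    set u : M := φ.symm P with hu_def
    have hφu : φ u = P := φ.apply_symm_apply P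
    -- the combination in M equals u
    have hsum : ⁅A.d 2, ⁅A.h 0, m⁆⁆ + eps • ⁅A.d 2, m⁆ - (2 : ℂ) • ⁅A.d 1, ⁅A.h 1, m⁆⁆
        + (⁅A.d 0, ⁅A.h 2, m⁆⁆ + eta • ⁅A.h 2, m⁆) = u := by
      apply φ.injective
      simp only [map_add, map_sub, map_smul, hd, hh, hφm, hφu, hP_def]
      have hk := keyZ lam ga (1 : Pst)
      linear_combination hk
    -- the combination in M ⊗ V
    have e1 : ⁅A.d 2, ⁅A.h 0, x⁆⁆ = (⁅A.d 2, ⁅A.h 0, m⁆⁆ + eps • ⁅A.d 2, m⁆) ⊗ₜ[ℂ] v := by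
      rw [hx_def, TensorProduct.LieModule.lie_tmul_right, hvh0, TensorProduct.tmul_smul,
        lie_add, lie_smul, TensorProduct.LieModule.lie_tmul_right,
        TensorProduct.LieModule.lie_tmul_right, hd2v, TensorProduct.tmul_zero,
        TensorProduct.tmul_zero, add_zero, add_zero, TensorProduct.add_tmul,
        ← TensorProduct.smul_tmul']
    have e2 : ⁅A.d 1, ⁅A.h 1, x⁆⁆ = ⁅A.d 1, ⁅A.h 1, m⁆⁆ ⊗ₜ[ℂ] v := by
      rw [hx_def, TensorProduct.LieModule.lie_tmul_right, hh1v, TensorProduct.tmul_zero,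
        add_zero, TensorProduct.LieModule.lie_tmul_right, hd1v, TensorProduct.tmul_zero,
        add_zero]
    have e3 : ⁅A.d 0, ⁅A.h 2, x⁆⁆ = (⁅A.d 0, ⁅A.h 2, m⁆⁆ + eta • ⁅A.h 2, m⁆) ⊗ₜ[ℂ] v := by
      rw [hx_def, TensorProduct.LieModule.lie_tmul_right, hh2v, TensorProduct.tmul_zero,
        add_zero, TensorProduct.LieModule.lie_tmul_right, hvd0, TensorProduct.tmul_smul,
        TensorProduct.add_tmul, ← TensorProduct.smul_tmul']
    have hwx : ⁅A.d 2, ⁅A.h 0, x⁆⁆ - (2 : ℂ) • ⁅A.d 1, ⁅A.h 1, x⁆⁆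
        + ⁅A.d 0, ⁅A.h 2, x⁆⁆ = u ⊗ₜ[ℂ] v := by
      rw [e1, e2, e3, ← hsum]
      simp only [TensorProduct.add_tmul, TensorProduct.sub_tmul, TensorProduct.smul_tmul']
    -- ψ kills the combination
    have hψ0 : ψ (u ⊗ₜ[ℂ] v) = 0 := by
      rw [← hwx, hψadd, hψsub, hψsmul, hψlie, hψlie, hψlie, hψlie, hψlie, hψlie]
      apply φ'.injective
      rw [map_add, map_sub, map_smul, hd', hd', hd', hh', hh', hh', map_zero]
      exact keyZ lam' ga' (φ' (ψ x))
    -- but u ⊗ v ≠ 0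
    have hu0 : u ≠ 0 := by
      intro hu
      have hP0 : P = 0 := by rw [← hφu, hu, map_zero]
      rw [hP_def, dOp_one, hOp_one] at hP0
      have hl2 : lam ^ (2 : ℤ) ≠ 0 := zpow_ne_zero 2 hlam
      rcases not_and_or.mp h0 with heta | heps
      · -- eta ≠ 0 : evaluate at s = -2*ga, t = 1
        have := congrArg (MvPolynomial.eval ![-(2 * ga), 1]) hP0
        simp only [MvPolynomial.smul_eq_C_mul, map_add, map_mul, MvPolynomial.eval_C,
          sVar, tVar, MvPolynomial.eval_X, Matrix.cons_val_zero, Matrix.cons_val_one,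
          Matrix.head_cons, map_zero] at this
        apply heta
        have h2 : eps * (lam ^ (2 : ℤ) * (-(2 * ga) + (2 : ℤ) * ga))
            + eta * (lam ^ (2 : ℤ) * 1) = 0 := by linear_combination this
        have h3 : eta * lam ^ (2 : ℤ) = 0 := by push_cast at h2 ⊢; linear_combination h2
        exact (mul_eq_zero.mp h3).resolve_right hl2
      · -- eps ≠ 0 : evaluate at s = 1 - 2*ga, t = 0
        have := congrArg (MvPolynomial.eval ![1 - 2 * ga, 0]) hP0
        simp only [MvPolynomial.smul_eq_C_mul, map_add, map_mul, MvPolynomial.eval_C,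
          sVar, tVar, MvPolynomial.eval_X, Matrix.cons_val_zero, Matrix.cons_val_one,
          Matrix.head_cons, map_zero] at this
        apply heps
        have h2 : eps * (lam ^ (2 : ℤ) * (1 - 2 * ga + (2 : ℤ) * ga)) = 0 := by
          push_cast at this ⊢; linear_combination this
        have h3 : eps * lam ^ (2 : ℤ) = 0 := by push_cast at h2 ⊢; linear_combination h2
        exact (mul_eq_zero.mp h3).resolve_right hl2
    exact tmul_ne_zero hu0 hv0 (ψ.injective (hψ0.trans hψzero.symm))


end
end
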